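/- For every partition λ = (λ_1 ≥ λ_2 ≥ ... ≥ λ_n ≥ 0) and ρ_m = (m, m−1, ..., 1): P^L_{ρ_{n−1}+λ}(x_1,...,x_n|b) = ( ∏_{1≤i<j≤n} (x_i +_F x_j) ) · s^L_λ(x_1,...,x_n|b) and Q^L_{ρ_n+λ}(x_1,...,x_n|b) = ( ∏_{1≤i≤j≤n} (x_i +_F x_j) ) · s^L_λ(x_1,...,x_n|b). -/

import Mathlib

/- ## Formal group laws, coefficientwise substitution, universal Schur P,Q-functions -/

noncomputable section

open Finset MvPowerSeries

/-- Substitution of two power series (with zero constant term) into a two-variable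
series `∑ a i j * u^i * v^j`, computed coefficientwise. -/
def fadd {L : Type} [CommRing L] {σ : Type} (a : ℕ → ℕ → L)
    (X Y : MvPowerSeries σ L) : MvPowerSeries σ L :=
  fun d => ∑ p ∈ Finset.range ((d.sum fun _ n => n) + 1) ×ˢ
      Finset.range ((d.sum fun _ n => n) + 1),
    a p.1 p.2 * MvPowerSeries.coeff (R := L) d (X ^ p.1 * Y ^ p.2)

/-- Substitution of a power series (with zero constant term) into a one-variable
series `∑ c k * u^k`, computed coefficientwise. -/
def fsub1 {L : Type} [CommRing L] {σ : Type} (c : ℕ → L)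
    (X : MvPowerSeries σ L) : MvPowerSeries σ L :=
  fun d => ∑ k ∈ Finset.range ((d.sum fun _ n => n) + 1),
    c k * MvPowerSeries.coeff (R := L) d (X ^ k)

/-- Substitution `x_i ↦ v i` in a multivariate power series, computed coefficientwise;
meaningful when every `v i` has zero constant term. -/
def msubst {L : Type} [CommRing L] {σ τ : Type} (v : σ → MvPowerSeries τ L)
    (f : MvPowerSeries σ L) : MvPowerSeries τ L :=
  fun d => ∑ᶠ e : σ →₀ ℕ,
    MvPowerSeries.coeff (R := L) e f * MvPowerSeries.coeff (R := L) d (e.prod fun i k => v i ^ k)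

/-- A one-dimensional commutative formal group law over `L` together with its
formal inverse series; the axioms are stated for substitution of arbitrary
power series with zero constant term. -/
structure FGL (L : Type) [CommRing L] where
  /-- the coefficients `a i j` of `F(u,v) = ∑ a i j · u^i v^j` -/
  a : ℕ → ℕ → L
  /-- the coefficients of the formal inverse `χ(u) = ∑ ch k · u^k` -/
  ch : ℕ → L
  ch_zero : ch 0 = 0
  add_zero' : ∀ {σ : Type} (X : MvPowerSeries σ L),
    MvPowerSeries.constantCoeff (σ := σ) (R := L) X = 0 → fadd a X 0 = X
  comm' : ∀ {σ : Type} (X Y : MvPowerSeries σ L),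
    MvPowerSeries.constantCoeff (σ := σ) (R := L) X = 0 → MvPowerSeries.constantCoeff (σ := σ) (R := L) Y = 0 →
      fadd a X Y = fadd a Y X
  assoc' : ∀ {σ : Type} (X Y Z : MvPowerSeries σ L),
    MvPowerSeries.constantCoeff (σ := σ) (R := L) X = 0 → MvPowerSeries.constantCoeff (σ := σ) (R := L) Y = 0 →
      MvPowerSeries.constantCoeff (σ := σ) (R := L) Z = 0 →
      fadd a (fadd a X Y) Z = fadd a X (fadd a Y Z)
  add_inv' : ∀ {σ : Type} (X : MvPowerSeries σ L),
    MvPowerSeries.constantCoeff (σ := σ) (R := L) X = 0 → fadd a X (fsub1 ch X) = 0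

/-- The formal inverse `X ↦ \bar X` associated to a formal group law. -/
def FGL.neg {L : Type} [CommRing L] (G : FGL L) {σ : Type}
    (X : MvPowerSeries σ L) : MvPowerSeries σ L := fsub1 G.ch X

variable {L : Type} [CommRing L] {σ : Type}

/-- `[t|b]^k = ∏_{i=1}^k (t +_F b_i)` (here `bs i` stands for `b_{i+1}`). -/
def facPow (G : FGL L) (t : MvPowerSeries σ L) (bs : ℕ → MvPowerSeries σ L) (k : ℕ) :
    MvPowerSeries σ L :=
  ∏ i ∈ Finset.range k, fadd G.a t (bs i)

/-- `[[t|b]]^k`: `[[t|b]]^0 = 1` and `[[t|b]]^k = (t +_F t)·[t|b]^{k-1}` for `k ≥ 1`. -/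
def facPowQ (G : FGL L) (t : MvPowerSeries σ L) (bs : ℕ → MvPowerSeries σ L) :
    ℕ → MvPowerSeries σ L
  | 0 => 1
  | (k + 1) => fadd G.a t t * facPow G t bs k

instance mvPowerSeries_isDomain [IsDomain L] : IsDomain (MvPowerSeries σ L) :=
  NoZeroDivisors.to_isDomain _

/-- `lam` is a strict partition (written with trailing zeros): entries strictly
decrease until they reach `0`. -/
def IsSP {n : ℕ} (lam : Fin n → ℕ) : Prop :=
  ∀ i j : Fin n, i < j → (lam j < lam i ∨ (lam i = 0 ∧ lam j = 0))

/-- The length (number of nonzero parts) of a partition written with trailing zeros. -/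
def spLen {n : ℕ} (lam : Fin n → ℕ) : ℕ :=
  (Finset.univ.filter fun i => lam i ≠ 0).card

variable [IsDomain L] [CharZero L]

/-- The universal factorial Schur P-function
`P^L_λ(x_1,…,x_n|b) = (1/(n-r)!) ∑_{w∈S_n} w[ [x|b]^λ ∏_{i=1}^r ∏_{j=i+1}^n (x_i +_F x_j)/(x_i +_F \bar x_j) ]`
(for a strict partition `λ` of length `r ≤ n`), as an element of the fraction field
of the power series ring. -/
def PLgen (G : FGL L) (n r : ℕ) (lam : Fin n → ℕ) (x : Fin n → MvPowerSeries σ L)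
    (bs : ℕ → MvPowerSeries σ L) : FractionRing (MvPowerSeries σ L) :=
  (((n - r).factorial : FractionRing (MvPowerSeries σ L)))⁻¹ *
    ∑ w : Equiv.Perm (Fin n),
      (algebraMap (MvPowerSeries σ L) (FractionRing (MvPowerSeries σ L))
        ((∏ i : Fin n, facPow G (x (w i)) bs (lam i)) *
          ∏ i ∈ Finset.univ.filter (fun i : Fin n => (i : ℕ) < r), ∏ j ∈ Finset.Ioi i,
            fadd G.a (x (w i)) (x (w j)))) /
      (algebraMap (MvPowerSeries σ L) (FractionRing (MvPowerSeries σ L))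
        (∏ i ∈ Finset.univ.filter (fun i : Fin n => (i : ℕ) < r), ∏ j ∈ Finset.Ioi i,
          fadd G.a (x (w i)) (G.neg (x (w j)))))

/-- The universal factorial Schur Q-function, defined like `PLgen` with
`[[x|b]]^λ` in place of `[x|b]^λ`. -/
def QLgen (G : FGL L) (n r : ℕ) (lam : Fin n → ℕ) (x : Fin n → MvPowerSeries σ L)
    (bs : ℕ → MvPowerSeries σ L) : FractionRing (MvPowerSeries σ L) :=
  (((n - r).factorial : FractionRing (MvPowerSeries σ L)))⁻¹ *
    ∑ w : Equiv.Perm (Fin n),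
      (algebraMap (MvPowerSeries σ L) (FractionRing (MvPowerSeries σ L))
        ((∏ i : Fin n, facPowQ G (x (w i)) bs (lam i)) *
          ∏ i ∈ Finset.univ.filter (fun i : Fin n => (i : ℕ) < r), ∏ j ∈ Finset.Ioi i,
            fadd G.a (x (w i)) (x (w j)))) /
      (algebraMap (MvPowerSeries σ L) (FractionRing (MvPowerSeries σ L))
        (∏ i ∈ Finset.univ.filter (fun i : Fin n => (i : ℕ) < r), ∏ j ∈ Finset.Ioi i,
          fadd G.a (x (w i)) (G.neg (x (w j)))))

/-- `s^L_λ(x_1,…,x_n|b) = ∑_{w∈S_n} w[ [x|b]^{λ+ρ_{n-1}} / ∏_{i<j} (x_i +_F \bar x_j) ]`. -/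
def sLgen (G : FGL L) (n : ℕ) (lam : Fin n → ℕ) (x : Fin n → MvPowerSeries σ L)
    (bs : ℕ → MvPowerSeries σ L) : FractionRing (MvPowerSeries σ L) :=
  ∑ w : Equiv.Perm (Fin n),
    (algebraMap (MvPowerSeries σ L) (FractionRing (MvPowerSeries σ L))
      (∏ i : Fin n, facPow G (x (w i)) bs (lam i + (n - 1 - (i : ℕ))))) /
    (algebraMap (MvPowerSeries σ L) (FractionRing (MvPowerSeries σ L))
      (∏ i : Fin n, ∏ j ∈ Finset.Ioi i, fadd G.a (x (w i)) (G.neg (x (w j)))))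


lemma prod_Ioi_perm {M : Type*} [CommMonoid M] {n : ℕ} (f : Fin n → Fin n → M)
    (hf : ∀ a b, f a b = f b a) (w : Equiv.Perm (Fin n)) :
    (∏ i : Fin n, ∏ j ∈ Finset.Ioi i, f (w i) (w j)) =
      ∏ i : Fin n, ∏ j ∈ Finset.Ioi i, f i j := by
  rw [Finset.prod_sigma', Finset.prod_sigma']
  refine Finset.prod_nbij'
    (fun x => if w x.1 < w x.2 then ⟨w x.1, w x.2⟩ else ⟨w x.2, w x.1⟩)
    (fun y => if w⁻¹ y.1 < w⁻¹ y.2 then ⟨w⁻¹ y.1, w⁻¹ y.2⟩ else ⟨w⁻¹ y.2, w⁻¹ y.1⟩)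
    ?_ ?_ ?_ ?_ ?_
  · intro x hx
    simp only [Finset.mem_sigma, Finset.mem_univ, Finset.mem_Ioi, true_and] at hx ⊢
    have hne : w x.1 ≠ w x.2 := fun h => (ne_of_lt hx) (w.injective h)
    split_ifs with h
    · exact h
    · exact lt_of_le_of_ne (not_lt.mp h) (Ne.symm hne)
  · intro y hy
    simp only [Finset.mem_sigma, Finset.mem_univ, Finset.mem_Ioi, true_and] at hy ⊢
    have hne : w⁻¹ y.1 ≠ w⁻¹ y.2 := fun h => (ne_of_lt hy) ((w⁻¹).injective h)
    split_ifs with h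
    · exact h
    · exact lt_of_le_of_ne (not_lt.mp h) (Ne.symm hne)
  · intro x hx
    simp only [Finset.mem_sigma, Finset.mem_univ, Finset.mem_Ioi, true_and] at hx
    by_cases h : w x.1 < w x.2 <;>
      simp [h, Equiv.symm_apply_apply, hx, hx.not_gt]
  · intro y hy
    simp only [Finset.mem_sigma, Finset.mem_univ, Finset.mem_Ioi, true_and] at hy
    by_cases h : w.symm y.1 < w.symm y.2 <;>
      simp [h, Equiv.apply_symm_apply, hy, hy.not_gt]
  · intro x hx
    split_ifs with h
    · rfl
    · exact hf _ _

lemma prod_filter_lt_Ioi {M : Type*} [CommMonoid M] {n r : ℕ} (hr : n - 1 ≤ r)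
    (g : Fin n → Fin n → M) :
    (∏ i ∈ Finset.univ.filter (fun i : Fin n => (i : ℕ) < r), ∏ j ∈ Finset.Ioi i, g i j)
      = ∏ i : Fin n, ∏ j ∈ Finset.Ioi i, g i j := by
  refine (Finset.prod_subset (Finset.filter_subset _ _) ?_).symm.symm
  intro i _ hi
  simp only [Finset.mem_filter, Finset.mem_univ, true_and, not_lt] at hi
  have he : Finset.Ioi i = ∅ := by
    ext j
    simp only [Finset.mem_Ioi, Finset.notMem_empty, iff_false, not_lt, Fin.le_def]
    have h1 := j.isLt
    have h2 := i.isLt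
    omega
  simp [he]


lemma spLen_ge {n : ℕ} (hn : 0 < n) (lam : Fin n → ℕ) :
    n - 1 ≤ spLen (fun i : Fin n => lam i + (n - 1 - (i : ℕ))) := by
  classical
  unfold spLen
  have h : (Finset.Iio (⟨n - 1, by omega⟩ : Fin n)) ⊆
      Finset.univ.filter (fun i : Fin n => lam i + (n - 1 - (i : ℕ)) ≠ 0) := by
    intro i hi
    simp only [Finset.mem_Iio, Fin.lt_def] at hi
    simp only [Finset.mem_filter, Finset.mem_univ, true_and]
    omega
  have := Finset.card_le_card h
  rwa [Fin.card_Iio] at this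

lemma spLen_le {n : ℕ} (lam : Fin n → ℕ) : spLen lam ≤ n := by
  classical
  unfold spLen
  exact (Finset.card_filter_le Finset.univ _).trans (by simp)

/-- Factorization: for a partition `λ = (λ_1 ≥ … ≥ λ_n ≥ 0)`,
`P^L_{ρ_{n-1}+λ}(x|b) = (∏_{i<j}(x_i +_F x_j))·s^L_λ(x|b)` and
`Q^L_{ρ_n+λ}(x|b) = (∏_{i≤j}(x_i +_F x_j))·s^L_λ(x|b)`. -/
theorem staircase_plus_partition_factorization
    {L : Type} [CommRing L] [IsDomain L] [CharZero L] (G : FGL L) (n : ℕ) (hn : 0 < n)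
    (lam : Fin n → ℕ) (hlam : Antitone lam) :
    PLgen G n (spLen fun i : Fin n => lam i + (n - 1 - (i : ℕ)))
        (fun i : Fin n => lam i + (n - 1 - (i : ℕ)))
        (fun i => MvPowerSeries.X (Sum.inl i)) (fun j => MvPowerSeries.X (Sum.inr j)) =
      algebraMap (MvPowerSeries (Fin n ⊕ ℕ) L) (FractionRing (MvPowerSeries (Fin n ⊕ ℕ) L))
        (∏ i : Fin n, ∏ j ∈ Finset.Ioi i,
          fadd G.a (MvPowerSeries.X (Sum.inl i)) (MvPowerSeries.X (Sum.inl j))) *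
      sLgen G n lam (fun i => MvPowerSeries.X (Sum.inl i)) (fun j => MvPowerSeries.X (Sum.inr j)) ∧
    QLgen G n n (fun i : Fin n => lam i + (n - (i : ℕ)))
        (fun i => MvPowerSeries.X (Sum.inl i)) (fun j => MvPowerSeries.X (Sum.inr j)) =
      algebraMap (MvPowerSeries (Fin n ⊕ ℕ) L) (FractionRing (MvPowerSeries (Fin n ⊕ ℕ) L))
        (∏ i : Fin n, ∏ j ∈ Finset.Ici i,
          fadd G.a (MvPowerSeries.X (Sum.inl i)) (MvPowerSeries.X (Sum.inl j))) *
      sLgen G n lam (fun i => MvPowerSeries.X (Sum.inl i)) (fun j => MvPowerSeries.X (Sum.inr j)) := by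

  classical
  have hcc : ∀ i : Fin n, MvPowerSeries.constantCoeff (σ := Fin n ⊕ ℕ) (R := L)
      (MvPowerSeries.X (Sum.inl i) : MvPowerSeries (Fin n ⊕ ℕ) L) = 0 :=
    fun i => MvPowerSeries.constantCoeff_X _
  have hcomm : ∀ a b : Fin n,
      fadd G.a (MvPowerSeries.X (Sum.inl a) : MvPowerSeries (Fin n ⊕ ℕ) L)
        (MvPowerSeries.X (Sum.inl b)) =
      fadd G.a (MvPowerSeries.X (Sum.inl b)) (MvPowerSeries.X (Sum.inl a)) :=
    fun a b => G.comm' _ _ (hcc a) (hcc b)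
  constructor
  · -- P part
    simp only [PLgen, sLgen]
    have hr1 : n - 1 ≤ spLen (fun i : Fin n => lam i + (n - 1 - (i : ℕ))) := spLen_ge hn lam
    have hr2 : spLen (fun i : Fin n => lam i + (n - 1 - (i : ℕ))) ≤ n := spLen_le _
    have hfac : (n - spLen (fun i : Fin n => lam i + (n - 1 - (i : ℕ)))).factorial = 1 := by
      have h : n - spLen (fun i : Fin n => lam i + (n - 1 - (i : ℕ))) = 0 ∨
          n - spLen (fun i : Fin n => lam i + (n - 1 - (i : ℕ))) = 1 := by omega
      rcases h with h | h <;> rw [h] <;> rfl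
    rw [hfac, Nat.cast_one, inv_one, one_mul, Finset.mul_sum]
    refine Finset.sum_congr rfl fun w _ => ?_
    rw [prod_filter_lt_Ioi hr1
        (fun a b => fadd G.a (MvPowerSeries.X (Sum.inl (w a)) : MvPowerSeries (Fin n ⊕ ℕ) L)
          (MvPowerSeries.X (Sum.inl (w b)))),
      prod_filter_lt_Ioi hr1
        (fun a b => fadd G.a (MvPowerSeries.X (Sum.inl (w a)) : MvPowerSeries (Fin n ⊕ ℕ) L)
          (G.neg (MvPowerSeries.X (Sum.inl (w b))))),
      prod_Ioi_perm
        (fun a b => fadd G.a (MvPowerSeries.X (Sum.inl a) : MvPowerSeries (Fin n ⊕ ℕ) L)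
          (MvPowerSeries.X (Sum.inl b))) hcomm w,
      map_mul]
    ring
  · -- Q part
    simp only [QLgen, sLgen]
    have hr1 : n - 1 ≤ n := by omega
    have hfac : (n - n).factorial = 1 := by rw [Nat.sub_self]; rfl
    rw [hfac, Nat.cast_one, inv_one, one_mul, Finset.mul_sum]
    have hIci : (∏ i : Fin n, ∏ j ∈ Finset.Ici i,
        fadd G.a (MvPowerSeries.X (Sum.inl i) : MvPowerSeries (Fin n ⊕ ℕ) L)
          (MvPowerSeries.X (Sum.inl j))) =
        (∏ i : Fin n, fadd G.a (MvPowerSeries.X (Sum.inl i) : MvPowerSeries (Fin n ⊕ ℕ) L)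
          (MvPowerSeries.X (Sum.inl i))) *
        ∏ i : Fin n, ∏ j ∈ Finset.Ioi i,
          fadd G.a (MvPowerSeries.X (Sum.inl i) : MvPowerSeries (Fin n ⊕ ℕ) L)
            (MvPowerSeries.X (Sum.inl j)) := by
      rw [← Finset.prod_mul_distrib]
      refine Finset.prod_congr rfl fun i _ => ?_
      rw [← Finset.Ioi_insert, Finset.prod_insert (by simp)]
    refine Finset.sum_congr rfl fun w _ => ?_
    have hQ : (∏ i : Fin n, facPowQ G
          (MvPowerSeries.X (Sum.inl (w i)) : MvPowerSeries (Fin n ⊕ ℕ) L)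
          (fun j => MvPowerSeries.X (Sum.inr j)) (lam i + (n - (i : ℕ)))) =
        (∏ i : Fin n, fadd G.a (MvPowerSeries.X (Sum.inl i) : MvPowerSeries (Fin n ⊕ ℕ) L)
          (MvPowerSeries.X (Sum.inl i))) *
        ∏ i : Fin n, facPow G
          (MvPowerSeries.X (Sum.inl (w i)) : MvPowerSeries (Fin n ⊕ ℕ) L)
          (fun j => MvPowerSeries.X (Sum.inr j)) (lam i + (n - 1 - (i : ℕ))) := by
      have hstep : ∀ i : Fin n, facPowQ G
          (MvPowerSeries.X (Sum.inl (w i)) : MvPowerSeries (Fin n ⊕ ℕ) L)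
          (fun j => MvPowerSeries.X (Sum.inr j)) (lam i + (n - (i : ℕ))) =
          fadd G.a (MvPowerSeries.X (Sum.inl (w i))) (MvPowerSeries.X (Sum.inl (w i))) *
          facPow G (MvPowerSeries.X (Sum.inl (w i)))
            (fun j => MvPowerSeries.X (Sum.inr j)) (lam i + (n - 1 - (i : ℕ))) := by
        intro i
        have hi := i.isLt
        have he : lam i + (n - (i : ℕ)) = (lam i + (n - 1 - (i : ℕ))) + 1 := by omega
        rw [he]
        rfl
      rw [Finset.prod_congr rfl fun i _ => hstep i, Finset.prod_mul_distrib,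
        Equiv.prod_comp w (fun i : Fin n =>
          fadd G.a (MvPowerSeries.X (Sum.inl i) : MvPowerSeries (Fin n ⊕ ℕ) L)
            (MvPowerSeries.X (Sum.inl i)))]
    rw [prod_filter_lt_Ioi hr1
        (fun a b => fadd G.a (MvPowerSeries.X (Sum.inl (w a)) : MvPowerSeries (Fin n ⊕ ℕ) L)
          (MvPowerSeries.X (Sum.inl (w b)))),
      prod_filter_lt_Ioi hr1
        (fun a b => fadd G.a (MvPowerSeries.X (Sum.inl (w a)) : MvPowerSeries (Fin n ⊕ ℕ) L)
          (G.neg (MvPowerSeries.X (Sum.inl (w b))))),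
      prod_Ioi_perm
        (fun a b => fadd G.a (MvPowerSeries.X (Sum.inl a) : MvPowerSeries (Fin n ⊕ ℕ) L)
          (MvPowerSeries.X (Sum.inl b))) hcomm w,
      hQ, hIci, map_mul, map_mul, map_mul]
    ring


end
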